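/- arXiv:2602.21577 — 2 statements merged into one kernel-verified Lean document; each statement's English description precedes it below -/
import Mathlib

section
/- Let k ≥ 1 and let s, t, q, n be integers with t ≥ k + 1, q ≥ 3, 0 ≤ s ≤ t - 1, and n ≥ kq + s + t. Then (t - k - 1)·n + (k²(q² - q + 1) - t(t + 2k - 1) + 5k)/2 + 5 - q - (t - k)·s > 0. -/
theorem stmt_3 (k s t q n : ℤ) (hk : 1 ≤ k) (ht : k + 1 ≤ t) (hq : 3 ≤ q)
    (hs0 : 0 ≤ s) (hst : s ≤ t - 1) (hn : k * q + s + t ≤ n) :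
    ((t : ℚ) - k - 1) * n + ((k : ℚ) ^ 2 * (q ^ 2 - q + 1) - t * (t + 2 * k - 1) + 5 * k) / 2
      + 5 - q - (t - k) * s > 0 := by
  have hkq : (0:ℤ) ≤ k*q - 3 := by nlinarith
  have h : (0:ℤ) < 2 * ((t - k - 1) * n) + (k ^ 2 * (q ^ 2 - q + 1) - t * (t + 2 * k - 1) + 5 * k)
      + 10 - 2 * q - 2 * ((t - k) * s) := by
    nlinarith [mul_nonneg (by linarith : (0:ℤ) ≤ t - k - 1) (by linarith : (0:ℤ) ≤ n - (k*q+s+t)),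
      mul_nonneg (by linarith : (0:ℤ) ≤ q - 3) hkq,
      mul_nonneg (by linarith : (0:ℤ) ≤ t - k - 1) (by linarith : (0:ℤ) ≤ t - k - 1),
      mul_nonneg (by linarith : (0:ℤ) ≤ k - 1) (by linarith : (0:ℤ) ≤ q - 3),
      mul_nonneg hkq hkq,
      mul_nonneg (by linarith : (0:ℤ) ≤ t - k - 1) hkq,
      mul_nonneg (by linarith : (0:ℤ) ≤ t - 1 - s) (by linarith : (0:ℤ) ≤ 2),
      mul_pos (by linarith : (0:ℤ) < k) (by linarith : (0:ℤ) < q)]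
  have h2 : (0:ℚ) < 2 * (((t:ℚ) - k - 1) * n) + ((k:ℚ) ^ 2 * (q ^ 2 - q + 1) - t * (t + 2 * k - 1) + 5 * k)
      + 10 - 2 * q - 2 * (((t:ℚ) - k) * s) := by exact_mod_cast h
  linarith
end

section
/- Let G be a graph on n vertices with m edges and minimum degree δ ≥ 1. Then ρ(G) ≤ (δ-1)/2 + sqrt(2m - nδ + (δ+1)²/4), where ρ(G) is the adjacency spectral radius. -/
/-- The adjacency spectral radius of a finite simple graph: the supremum of the
(real) spectrum of its adjacency matrix. -/
noncomputable def adjSpectralRadius {V : Type*} [Fintype V] [DecidableEq V]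
    (G : SimpleGraph V) [DecidableRel G.Adj] : ℝ :=
  sSup (spectrum ℝ (G.adjMatrix ℝ))

open Finset Matrix

section aux

variable {V : Type*} [Fintype V] [DecidableEq V] [Nonempty V]
variable (G : SimpleGraph V) [DecidableRel G.Adj]

lemma adj_isHermitian : (G.adjMatrix ℝ).IsHermitian := by
  ext i j
  simp [Matrix.conjTranspose_apply, SimpleGraph.adjMatrix_apply, SimpleGraph.adj_comm]

lemma adj_row_sum (v : V) : ∑ w, G.adjMatrix ℝ v w = (G.degree v : ℝ) := by
  simp [SimpleGraph.adjMatrix_apply, Finset.sum_boole, SimpleGraph.degree,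
    SimpleGraph.neighborFinset_eq_filter]

end aux

theorem stmt_16 {V : Type*} [Fintype V] [DecidableEq V] [Nonempty V]
    (G : SimpleGraph V) [DecidableRel G.Adj] (hδ : 1 ≤ G.minDegree) :
    adjSpectralRadius G ≤ ((G.minDegree : ℝ) - 1) / 2 +
      Real.sqrt (2 * G.edgeFinset.card - (Fintype.card V) * G.minDegree
        + ((G.minDegree : ℝ) + 1) ^ 2 / 4) := by
  classical
  set A : Matrix V V ℝ := G.adjMatrix ℝ with hAdef
  have hA : A.IsHermitian := adj_isHermitian G
  set ρ : ℝ := adjSpectralRadius G with hρdef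
  have hspec : spectrum ℝ A = Set.range hA.eigenvalues :=
    Matrix.IsHermitian.spectrum_real_eq_range_eigenvalues hA
  have hfin : (spectrum ℝ A).Finite := Matrix.finite_real_spectrum
  have hne : (spectrum ℝ A).Nonempty := by
    rw [hspec]; exact Set.range_nonempty _
  have hmem : ρ ∈ spectrum ℝ A := hne.csSup_mem hfin
  have hub : ∀ z ∈ spectrum ℝ A, z ≤ ρ := fun z hz => le_csSup hfin.bddAbove hz
  -- the matrix ρ•1 - A is positive semidefinite
  have hBH : (ρ • (1 : Matrix V V ℝ) - A).IsHermitian := by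
    show (ρ • (1 : Matrix V V ℝ) - A)ᴴ = _
    rw [Matrix.conjTranspose_sub, Matrix.conjTranspose_smul, Matrix.conjTranspose_one, hA.eq,
      star_trivial]
  have hB : (ρ • (1 : Matrix V V ℝ) - A).PosSemidef := by
    refine hBH.posSemidef_iff_eigenvalues_nonneg.mpr ?_
    intro i
    suffices h : ∀ μ ∈ spectrum ℝ (ρ • (1 : Matrix V V ℝ) - A), 0 ≤ μ from
      h _ (hBH.eigenvalues_mem_spectrum_real i)
    intro μ hμ
    have h2 : ρ • (1 : Matrix V V ℝ) - A = algebraMap ℝ (Matrix V V ℝ) ρ - A := by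
      rw [Algebra.algebraMap_eq_smul_one]
    rw [h2, ← spectrum.singleton_sub_eq] at hμ
    obtain ⟨r, hr, s, hs, hrs⟩ := hμ
    rw [Set.mem_singleton_iff] at hr
    subst hr
    have h3 : ρ - s = μ := hrs
    have := hub s hs
    linarith
  -- Rayleigh quotient bound
  have rayleigh : ∀ x : V → ℝ, x ⬝ᵥ (A *ᵥ x) ≤ ρ * (x ⬝ᵥ x) := by
    intro x
    have h0 := hB.dotProduct_mulVec_nonneg x
    have hexp : x ⬝ᵥ ((ρ • (1 : Matrix V V ℝ) - A) *ᵥ x) = ρ * (x ⬝ᵥ x) - x ⬝ᵥ (A *ᵥ x) := by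
      rw [Matrix.sub_mulVec, Matrix.smul_mulVec, Matrix.one_mulVec, dotProduct_sub,
        dotProduct_smul, smul_eq_mul]
    rw [star_trivial, hexp] at h0
    linarith
  -- ρ ≥ δ
  set δR : ℝ := (G.minDegree : ℝ) with hδRdef
  have hδ1 : (1 : ℝ) ≤ δR := by rw [hδRdef]; exact_mod_cast hδ
  have hdegδ : ∀ v : V, δR ≤ (G.degree v : ℝ) := by
    intro v; rw [hδRdef]; exact_mod_cast G.minDegree_le_degree v
  have hρδ : δR ≤ ρ := by
    set one : V → ℝ := fun _ => 1 with honedef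
    have h1 := rayleigh one
    have h2 : one ⬝ᵥ (A *ᵥ one) = ∑ v, (G.degree v : ℝ) := by
      simp only [dotProduct, one_mul]
      refine Finset.sum_congr rfl fun v _ => ?_
      rw [Matrix.mulVec, dotProduct]
      simp only [honedef, one_mul, mul_one]
      exact adj_row_sum G v
    have h3 : one ⬝ᵥ one = (Fintype.card V : ℝ) := by
      simp [honedef, dotProduct]
    rw [h2, h3] at h1
    have h4 : (Fintype.card V : ℝ) * δR ≤ ∑ v, (G.degree v : ℝ) := by
      calc (Fintype.card V : ℝ) * δR = ∑ _v : V, δR := by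
            rw [Finset.sum_const, nsmul_eq_mul, Finset.card_univ]
        _ ≤ ∑ v, (G.degree v : ℝ) := Finset.sum_le_sum fun v _ => hdegδ v
    have hn : (0:ℝ) < (Fintype.card V : ℝ) := by
      exact_mod_cast Fintype.card_pos
    nlinarith
  -- a nonnegative eigenvector for ρ
  obtain ⟨i₀, hi₀⟩ : ∃ i, hA.eigenvalues i = ρ := by
    rw [hspec] at hmem; exact hmem
  set x : V → ℝ := ⇑(hA.eigenvectorBasis i₀) with hxdef
  have hx : A *ᵥ x = ρ • x := by
    rw [hxdef, hA.mulVec_eigenvectorBasis, hi₀]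
  have hxne : ∃ v, x v ≠ 0 := by
    by_contra h
    push_neg at h
    have hz : hA.eigenvectorBasis i₀ = 0 := by
      ext v; exact h v
    exact hA.eigenvectorBasis.orthonormal.ne_zero i₀ hz
  set y : V → ℝ := fun v => |x v| with hydef
  have hy0 : ∀ v, 0 ≤ y v := fun v => abs_nonneg _
  have hyA : A *ᵥ y = ρ • y := by
    have h1 : x ⬝ᵥ (A *ᵥ x) = ρ * (x ⬝ᵥ x) := by
      rw [hx, dotProduct_smul, smul_eq_mul]
    have h2 : x ⬝ᵥ x = y ⬝ᵥ y := by
      simp only [dotProduct, hydef, abs_mul_abs_self]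
    have h3 : x ⬝ᵥ (A *ᵥ x) ≤ y ⬝ᵥ (A *ᵥ y) := by
      simp only [dotProduct, Matrix.mulVec]
      refine Finset.sum_le_sum fun v _ => ?_
      calc x v * (fun w => A v w) ⬝ᵥ x ≤ |x v * (fun w => A v w) ⬝ᵥ x| := le_abs_self _
        _ = |x v| * |(fun w => A v w) ⬝ᵥ x| := abs_mul _ _
        _ ≤ |x v| * ((fun w => A v w) ⬝ᵥ y) := by
            refine mul_le_mul_of_nonneg_left ?_ (abs_nonneg _)
            rw [dotProduct, dotProduct]
            calc |∑ w, A v w * x w| ≤ ∑ w, |A v w * x w| := Finset.abs_sum_le_sum_abs _ _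
              _ = ∑ w, A v w * |x w| := by
                  refine Finset.sum_congr rfl fun w _ => ?_
                  rw [abs_mul, abs_of_nonneg]
                  simp [hAdef, SimpleGraph.adjMatrix_apply]
                  positivity
        _ = y v * (fun w => A v w) ⬝ᵥ y := rfl
    have h4 := rayleigh y
    have h5 : y ⬝ᵥ ((ρ • (1 : Matrix V V ℝ) - A) *ᵥ y) = 0 := by
      have hexp : y ⬝ᵥ ((ρ • (1 : Matrix V V ℝ) - A) *ᵥ y) = ρ * (y ⬝ᵥ y) - y ⬝ᵥ (A *ᵥ y) := by
        rw [Matrix.sub_mulVec, Matrix.smul_mulVec, Matrix.one_mulVec, dotProduct_sub,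
          dotProduct_smul, smul_eq_mul]
      have h0 := hB.dotProduct_mulVec_nonneg y
      rw [star_trivial] at h0
      rw [hexp]
      rw [h2] at h1
      linarith
    have h6 : (ρ • (1 : Matrix V V ℝ) - A) *ᵥ y = 0 := by
      refine (hB.dotProduct_mulVec_zero_iff y).mp ?_
      rw [star_trivial]; exact h5
    have h7 : ρ • y - A *ᵥ y = 0 := by
      rw [← h6, Matrix.sub_mulVec, Matrix.smul_mulVec, Matrix.one_mulVec]
    exact (sub_eq_zero.mp h7).symm
  have heq : ∀ v, ∑ w, A v w * y w = ρ * y v := by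
    intro v
    have := congrFun hyA v
    simpa [Matrix.mulVec, dotProduct] using this
  have hyne : ∃ v, 0 < y v := by
    obtain ⟨v, hv⟩ := hxne
    exact ⟨v, abs_pos.mpr hv⟩
  obtain ⟨u, -, hu⟩ := Finset.exists_max_image Finset.univ y ⟨Classical.arbitrary V, mem_univ _⟩
  have hu' : ∀ v, y v ≤ y u := fun v => hu v (mem_univ v)
  have hu0 : 0 < y u := by
    obtain ⟨v, hv⟩ := hyne
    exact lt_of_lt_of_le hv (hu' v)
  have hsym : ∀ v w, A v w = A w v := by
    intro v w
    simp [hAdef, SimpleGraph.adjMatrix_apply, SimpleGraph.adj_comm]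
  -- partition of a full sum according to the neighborhood of u
  have hpart : ∀ g : V → ℝ, ∑ v, g v =
      g u + (∑ v, A u v * g v) + ∑ v, (if ¬ G.Adj u v ∧ v ≠ u then g v else 0) := by
    intro g
    have hgu : g u = ∑ v, (if v = u then g v else 0) := by
      rw [Finset.sum_ite_eq' Finset.univ u g]
      simp
    rw [hgu, ← Finset.sum_add_distrib, ← Finset.sum_add_distrib]
    refine Finset.sum_congr rfl fun v _ => ?_
    rcases eq_or_ne v u with rfl | hv
    · simp [hAdef, SimpleGraph.adjMatrix_apply, G.irrefl]
    · by_cases hadj : G.Adj u v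
      · simp [hAdef, SimpleGraph.adjMatrix_apply, hadj, hv]
      · simp [hAdef, SimpleGraph.adjMatrix_apply, hadj, hv]
  set C : ℝ := ∑ v, (if ¬ G.Adj u v ∧ v ≠ u then y v else 0) with hCdef
  have hC0 : 0 ≤ C := by
    refine Finset.sum_nonneg fun v _ => ?_
    split
    · exact hy0 v
    · exact le_refl 0
  set n : ℝ := (Fintype.card V : ℝ) with hndef
  set m : ℝ := (G.edgeFinset.card : ℝ) with hmdef
  have hsumdeg : ∑ v, (G.degree v : ℝ) = 2 * m := by
    rw [hmdef]
    exact_mod_cast congrArg (Nat.cast : ℕ → ℝ) (G.sum_degrees_eq_twice_card_edges)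
  -- identity I1
  have hI1 : ∑ v, y v = y u + ρ * y u + C := by
    have := hpart y
    rw [heq u] at this
    exact this
  -- identity I4 : ∑ v, ρ * y v = ∑ w, (degree w) * y w
  have hI4 : ∑ v, ρ * y v = ∑ w, (G.degree w : ℝ) * y w := by
    calc ∑ v, ρ * y v = ∑ v, ∑ w, A v w * y w := by
          refine Finset.sum_congr rfl fun v _ => (heq v).symm
      _ = ∑ w, ∑ v, A v w * y w := Finset.sum_comm
      _ = ∑ w, (G.degree w : ℝ) * y w := by
          refine Finset.sum_congr rfl fun w _ => ?_
          rw [← Finset.sum_mul]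
          congr 1
          calc ∑ v, A v w = ∑ v, A w v := by
                refine Finset.sum_congr rfl fun v _ => hsym v w
            _ = (G.degree w : ℝ) := adj_row_sum G w
  -- identity I2 : main exact identity
  have hI2 : ρ * (ρ * y u) = (∑ w, (G.degree w : ℝ) * y w) - ρ * y u - ρ * C := by
    have hg := hpart (fun v => ρ * y v)
    have hL : ρ * (ρ * y u) = ∑ v, A u v * (ρ * y v) := by
      rw [← heq u, Finset.mul_sum]
      refine Finset.sum_congr rfl fun v _ => by ring
    have hCpull : ∑ v, (if ¬ G.Adj u v ∧ v ≠ u then ρ * y v else 0) = ρ * C := by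
      rw [hCdef, Finset.mul_sum]
      refine Finset.sum_congr rfl fun v _ => ?_
      split <;> simp
    rw [hCpull] at hg
    rw [hI4] at hg
    rw [hL]
    linarith
  -- bound I5
  have hI5 : ∑ w, (G.degree w : ℝ) * y w ≤ (2 * m - n * δR) * y u + δR * ∑ w, y w := by
    have step : ∀ w, (G.degree w : ℝ) * y w ≤ ((G.degree w : ℝ) - δR) * y u + δR * y w := by
      intro w
      have h1 : ((G.degree w : ℝ) - δR) * y w ≤ ((G.degree w : ℝ) - δR) * y u :=
        mul_le_mul_of_nonneg_left (hu' w) (by linarith [hdegδ w])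
      nlinarith [hy0 w]
    calc ∑ w, (G.degree w : ℝ) * y w ≤ ∑ w, (((G.degree w : ℝ) - δR) * y u + δR * y w) :=
          Finset.sum_le_sum fun w _ => step w
      _ = (∑ w, ((G.degree w : ℝ) - δR)) * y u + δR * ∑ w, y w := by
          rw [Finset.sum_add_distrib, Finset.sum_mul, Finset.mul_sum]
      _ = (2 * m - n * δR) * y u + δR * ∑ w, y w := by
          congr 1
          rw [Finset.sum_sub_distrib, hsumdeg, Finset.sum_const, nsmul_eq_mul,
            Finset.card_univ, hndef]
  have hkey : ρ ^ 2 ≤ 2 * m - n * δR + δR + (δR - 1) * ρ := by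
    have hchain : ρ * (ρ * y u) ≤ (2 * m - n * δR + δR + (δR - 1) * ρ) * y u := by
      rw [hI2]
      have h1 := hI5
      rw [hI1] at h1
      nlinarith [mul_nonpos_of_nonpos_of_nonneg (sub_nonpos.mpr hρδ) hC0]
    have := (mul_le_mul_iff_of_pos_right hu0).mp (by linarith [hchain] : ρ ^ 2 * y u ≤ (2 * m - n * δR + δR + (δR - 1) * ρ) * y u)
    exact this
  -- final algebra
  have h6 : (ρ - (δR - 1) / 2) ^ 2 ≤ 2 * m - n * δR + (δR + 1) ^ 2 / 4 := by nlinarith [hkey]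
  have h7 : 0 ≤ ρ - (δR - 1) / 2 := by linarith
  have h8 : ρ - (δR - 1) / 2 ≤ Real.sqrt (2 * m - n * δR + (δR + 1) ^ 2 / 4) := by
    calc ρ - (δR - 1) / 2 = Real.sqrt ((ρ - (δR - 1) / 2) ^ 2) := by
          rw [Real.sqrt_sq h7]
      _ ≤ Real.sqrt (2 * m - n * δR + (δR + 1) ^ 2 / 4) := Real.sqrt_le_sqrt h6
  linarith
end
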